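/- arXiv:1210.7931 — 5 statements merged into one kernel-verified Lean document; each statement's English description precedes it below -/
import Mathlib

section
/- If (N,e) is a polyquantoid, then (N,ê), where ê(I) = e(I) + Σ_{i∈I} e({i}), is a tight selfdual polymatroid. -/
open Finset

noncomputable def hatFn {N : Type*} [DecidableEq N] (e : Finset N → ℝ) (I : Finset N) : ℝ :=
  e I + ∑ i ∈ I, e {i}

noncomputable def checkFn {N : Type*} [DecidableEq N] (h : Finset N → ℝ) (I : Finset N) : ℝ :=
  h I - (1/2) * ∑ i ∈ I, h {i}

theorem polyquantoid_to_polymatroid {N : Type*} [Fintype N] [DecidableEq N] (e : Finset N → ℝ)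
    (hnorm : e ∅ = 0)
    (hcompl : ∀ I : Finset N, e I = e Iᶜ)
    (hsub : ∀ I J : Finset N, e (I ∪ J) + e (I ∩ J) ≤ e I + e J) :
    hatFn e ∅ = 0 ∧
    (∀ I J : Finset N, I ⊆ J → hatFn e I ≤ hatFn e J) ∧
    (∀ I J : Finset N, hatFn e (I ∪ J) + hatFn e (I ∩ J) ≤ hatFn e I + hatFn e J) ∧
    (∀ i : N, hatFn e {i}ᶜ = hatFn e Finset.univ) ∧
    (∀ I : Finset N, hatFn e I = hatFn e Iᶜ - hatFn e Finset.univ + ∑ i ∈ I, hatFn e {i}) := by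
  have huniv : e (univ : Finset N) = 0 := by
    have := hcompl (∅ : Finset N)
    simpa [hnorm] using this.symm
  -- insert step
  have hstep : ∀ (I : Finset N) (j : N), j ∉ I → hatFn e I ≤ hatFn e (insert j I) := by
    intro I j hj
    have h1 := hsub (insert j I) ({j}ᶜ)
    have hU : insert j I ∪ ({j}ᶜ : Finset N) = univ := by
      ext x; by_cases hx : x = j <;> simp [hx]
    have hI : insert j I ∩ ({j}ᶜ : Finset N) = I := by
      ext x
      constructor
      · intro hx
        simp only [mem_inter, mem_insert, mem_compl, mem_singleton] at hx
        rcases hx.1 with h | h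
        · exact absurd h hx.2
        · exact h
      · intro hx
        simp only [mem_inter, mem_insert, mem_compl, mem_singleton]
        exact ⟨Or.inr hx, fun h => hj (h ▸ hx)⟩
    rw [hU, hI, huniv] at h1
    have h2 : e I ≤ e (insert j I) + e {j} := by
      have := (hcompl {j}).symm
      linarith [h1, this]
    have hsum : ∑ i ∈ insert j I, e {i} = e {j} + ∑ i ∈ I, e {i} :=
      Finset.sum_insert hj
    simp only [hatFn, hsum]
    linarith
  have hmono : ∀ I J : Finset N, I ⊆ J → hatFn e I ≤ hatFn e J := by
    intro I J hIJ
    have key : ∀ K : Finset N, hatFn e I ≤ hatFn e (I ∪ K) := by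
      intro K
      induction K using Finset.induction with
      | empty => simp
      | @insert a K ha ih =>
        by_cases haI : a ∈ I ∪ K
        · have : I ∪ insert a K = I ∪ K := by
            ext x; simp only [mem_union, mem_insert]
            constructor
            · rintro (h | rfl | h)
              · exact Or.inl h
              · simpa using haI
              · exact Or.inr h
            · rintro (h | h)
              · exact Or.inl h
              · exact Or.inr (Or.inr h)
          rw [this]; exact ih
        · have : I ∪ insert a K = insert a (I ∪ K) := by
            ext x; simp only [mem_union, mem_insert]; tauto
          rw [this]
          exact le_trans ih (hstep _ _ haI)
    have := key J
    rwa [Finset.union_eq_right.mpr hIJ] at this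
  refine ⟨by simp [hatFn, hnorm], hmono, ?_, ?_, ?_⟩
  · intro I J
    simp only [hatFn]
    have hs : ∑ i ∈ I ∪ J, e {i} + ∑ i ∈ I ∩ J, e {i} = ∑ i ∈ I, e {i} + ∑ i ∈ J, e {i} :=
      Finset.sum_union_inter
    linarith [hsub I J]
  · intro i
    simp only [hatFn, huniv]
    have h1 : e ({i}ᶜ : Finset N) = e {i} := (hcompl {i}).symm
    have h2 : ∑ j ∈ ({i}ᶜ : Finset N), e {j} + ∑ j ∈ ({i} : Finset N), e {j} =
        ∑ j ∈ (univ : Finset N), e {j} := Finset.sum_compl_add_sum _ _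
    have h3 : ∑ j ∈ ({i} : Finset N), e {j} = e {i} := by simp
    linarith
  · intro I
    simp only [hatFn, huniv]
    have h1 : e (Iᶜ : Finset N) = e I := (hcompl I).symm
    have h2 : ∑ j ∈ (Iᶜ : Finset N), e {j} + ∑ j ∈ I, e {j} = ∑ j ∈ (univ : Finset N), e {j} :=
      Finset.sum_compl_add_sum _ _
    have h3 : ∑ i ∈ I, (e {i} + ∑ j ∈ ({i} : Finset N), e {j}) = 2 * ∑ i ∈ I, e {i} := by
      simp [Finset.sum_add_distrib]; ring
    linarith
end

section
/- If (N,h) is a tight selfdual polymatroid, then (N,ȟ), where ȟ(I) = h(I) − (1/2)Σ_{i∈I} h({i}), is a polyquantoid. -/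
open Finset

theorem polymatroid_to_polyquantoid {N : Type*} [Fintype N] [DecidableEq N] (h : Finset N → ℝ)
    (hnorm : h ∅ = 0)
    (hmono : ∀ I J : Finset N, I ⊆ J → h I ≤ h J)
    (hsub : ∀ I J : Finset N, h (I ∪ J) + h (I ∩ J) ≤ h I + h J)
    (htight : ∀ i : N, h {i}ᶜ = h Finset.univ)
    (hself : ∀ I : Finset N, h I = h Iᶜ - h Finset.univ + ∑ i ∈ I, h {i}) :
    checkFn h ∅ = 0 ∧
    (∀ I : Finset N, checkFn h I = checkFn h Iᶜ) ∧
    (∀ I J : Finset N, checkFn h (I ∪ J) + checkFn h (I ∩ J) ≤ checkFn h I + checkFn h J) := by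
  have hsumuniv : ∑ i : N, h {i} = 2 * h Finset.univ := by
    have := hself Finset.univ
    simp [hnorm] at this
    linarith
  refine ⟨by simp [checkFn, hnorm], ?_, ?_⟩
  · intro I
    have hcomp : ∑ i ∈ I, h {i} + ∑ i ∈ Iᶜ, h {i} = ∑ i : N, h {i} :=
      Finset.sum_add_sum_compl I _
    have := hself I
    unfold checkFn
    rw [hsumuniv] at hcomp
    linarith
  · intro I J
    have hsum : ∑ i ∈ I ∪ J, h {i} + ∑ i ∈ I ∩ J, h {i}
        = ∑ i ∈ I, h {i} + ∑ i ∈ J, h {i} := Finset.sum_union_inter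
    have := hsub I J
    unfold checkFn
    linarith
end

section
/- If a polymatroid (N,h) has an ideal element, then there exist a matroid rank function r on N and a real t > 0 such that h = t·r. -/
open Finset

structure BDPoly (N : Type*) [Fintype N] [DecidableEq N] where
  h : Finset N → ℝ
  n : N
  hnorm : h ∅ = 0
  hmono : ∀ I J : Finset N, I ⊆ J → h I ≤ h J
  hsub : ∀ I J : Finset N, h (I ∪ J) + h (I ∩ J) ≤ h I + h J
  hperf : ∀ I : Finset N, n ∉ I → h (insert n I) - h I = h {n} ∨ h (insert n I) - h I = 0
  hval : ∀ i : N, i ≠ n → h {i} = h {n}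

namespace BDPoly

variable {N : Type*} [Fintype N] [DecidableEq N] (S : BDPoly N)

lemma h_nonneg (X : Finset N) : 0 ≤ S.h X := by
  have := S.hmono ∅ X (Finset.empty_subset X)
  rw [S.hnorm] at this; exact this

lemma diff_le (b : N) (X : Finset N) : S.h (insert b X) ≤ S.h X + S.h {b} := by
  have h1 := S.hsub X {b}
  have h3 : X ∪ {b} = insert b X := by ext x; simp [or_comm]
  rw [h3] at h1
  have h2 := S.h_nonneg (X ∩ {b})
  linarith

lemma diff_mono {X Y : Finset N} (b : N) (hXY : X ⊆ Y) (hbY : b ∉ Y) :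
    S.h (insert b Y) - S.h Y ≤ S.h (insert b X) - S.h X := by
  have h1 := S.hsub (insert b X) Y
  rw [Finset.insert_union, Finset.union_eq_right.mpr hXY,
    Finset.insert_inter_of_notMem hbY, Finset.inter_eq_left.mpr hXY] at h1
  linarith

lemma diff_nonneg (b : N) (X : Finset N) : S.h X ≤ S.h (insert b X) :=
  S.hmono _ _ (Finset.subset_insert _ _)

lemma a_mono {X Y : Finset N} (hXY : X ⊆ Y) (hnY : S.n ∉ Y) :
    S.h (insert S.n Y) - S.h Y ≤ S.h (insert S.n X) - S.h X :=
  S.diff_mono S.n hXY hnY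

lemma jump {W : Finset N} {b : N} (hbn : b ≠ S.n)
    (haW : S.h (insert S.n W) - S.h W = S.h {S.n})
    (haWb : S.h (insert S.n (insert b W)) = S.h (insert b W)) :
    S.h (insert b W) = S.h W + S.h {S.n} := by
  have hup : S.h (insert b W) ≤ S.h W + S.h {b} := S.diff_le b W
  rw [S.hval b hbn] at hup
  have hlow : S.h (insert S.n W) ≤ S.h (insert S.n (insert b W)) :=
    S.hmono _ _ (Finset.insert_subset_insert _ (Finset.subset_insert _ _))
  rw [haWb] at hlow
  linarith

/-- the parallel/interchange lemma: if `W` is a "witness" for `w`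
(W unauthorized, W ∪ {w} authorized), then `w` and `n` are interchangeable over any
superset of `W`. -/
lemma parallel {W : Finset N} {w : N}
    (hwW : w ∉ W) (hwn : w ≠ S.n)
    (haS : S.h (insert S.n W) - S.h W = S.h {S.n})
    (haSw : S.h (insert S.n (insert w W)) = S.h (insert w W)) :
    ∀ T : Finset N, W ⊆ T → S.n ∉ T → w ∉ T →
      S.h (insert w T) = S.h (insert S.n T) := by
  have hjump : S.h (insert w W) = S.h W + S.h {S.n} := S.jump hwn haS haSw
  -- P2: for any T' ⊇ insert w W with n ∉ T', h (insert n T') = h T'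
  have P2 : ∀ T' : Finset N, insert w W ⊆ T' → S.n ∉ T' →
      S.h (insert S.n T') = S.h T' := by
    intro T' hsub hnT'
    have h1 := S.hsub T' (insert S.n (insert w W))
    have e1 : T' ∪ insert S.n (insert w W) = insert S.n T' := by
      rw [Finset.union_insert, Finset.union_eq_left.mpr hsub]
    have e2 : T' ∩ insert S.n (insert w W) = insert w W := by
      rw [Finset.inter_insert_of_notMem hnT', Finset.inter_eq_right.mpr hsub]
    rw [e1, e2, haSw] at h1
    have h2 : S.h T' ≤ S.h (insert S.n T') := S.diff_nonneg _ _
    linarith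
  intro T hWT hnT hwT
  have h1 := S.hsub (insert S.n T) (insert S.n (insert w W))
  have e1 : insert S.n T ∪ insert S.n (insert w W) = insert S.n (insert w T) := by
    rw [← Finset.insert_union_distrib, Finset.union_insert, Finset.union_eq_left.mpr hWT]
  have e2 : insert S.n T ∩ insert S.n (insert w W) = insert S.n W := by
    rw [← Finset.insert_inter_distrib, Finset.inter_insert_of_notMem hwT,
      Finset.inter_eq_right.mpr hWT]
  rw [e1, e2, haSw, hjump] at h1
  have h2 : S.h (insert S.n T) ≤ S.h (insert S.n (insert w T)) :=
    S.hmono _ _ (Finset.insert_subset_insert _ (Finset.subset_insert _ _))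
  have h3 : S.h (insert S.n (insert w T)) = S.h (insert w T) :=
    P2 (insert w T) (Finset.insert_subset_insert _ hWT)
      (by
        simp only [Finset.mem_insert]
        rintro (hh | hh)
        · exact hwn hh.symm
        · exact hnT hh)
  -- from h1: h (insert n (insert w T)) + (h W + t) ≤ h (insert n T) + (h W + t)
  have h4 : S.h (insert S.n (insert w T)) ≤ S.h (insert S.n T) := by linarith
  rw [← h3]
  linarith


/-- The heart of the proof: the inductive step for "every increment is 0 or t",
in the main case where `n ∉ X` and `b ≠ n`. -/
lemma main_case (ht : 0 < S.h {S.n})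
    (hess : ∀ i : N, i ≠ S.n → ∃ I : Finset N, S.n ∉ I ∧ i ∈ I ∧
      S.h (insert S.n I) = S.h I ∧
      S.h (insert S.n (I.erase i)) - S.h (I.erase i) = S.h {S.n})
    {m : ℕ} {X : Finset N} {b : N}
    (IH : ∀ Z : Finset N, Z.card ≤ m → ∀ c, c ∉ Z →
      S.h (insert c Z) - S.h Z = S.h {S.n} ∨ S.h (insert c Z) - S.h Z = 0)
    (hXcard : X.card = m + 1) (hb : b ∉ X) (hbn : b ≠ S.n) (hnX : S.n ∉ X) :
    S.h (insert b X) - S.h X = S.h {S.n} ∨ S.h (insert b X) - S.h X = 0 := by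
  set t := S.h {S.n} with htdef
  by_contra hcon
  push_neg at hcon
  obtain ⟨hd1, hd0⟩ := hcon
  have hd_nonneg : 0 ≤ S.h (insert b X) - S.h X := by
    have := S.diff_nonneg b X; linarith
  have hd_le : S.h (insert b X) - S.h X ≤ t := by
    have h1 := S.diff_le b X
    rw [S.hval b hbn] at h1
    linarith
  have hdpos : 0 < S.h (insert b X) - S.h X := hd_nonneg.lt_of_ne (Ne.symm hd0)
  have hdlt : S.h (insert b X) - S.h X < t := lt_of_le_of_ne hd_le hd1
  set d := S.h (insert b X) - S.h X with hddef
  have hKval : S.h (insert b X) = S.h X + d := by rw [hddef]; ring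
  -- n is not in insert b X
  have hnK : S.n ∉ insert b X := by
    rw [Finset.mem_insert]
    rintro (hh | hh)
    · exact hbn hh.symm
    · exact hnX hh
  -- every z in X: the increment of b over X.erase z is full
  have step_b : ∀ z ∈ X, S.h (insert b (X.erase z)) - S.h (X.erase z) = t := by
    intro z hz
    have hce : (X.erase z).card ≤ m := by
      rw [Finset.card_erase_of_mem hz, hXcard]
      omega
    have hbz : b ∉ X.erase z := fun hh => hb (Finset.erase_subset _ _ hh)
    rcases IH _ hce b hbz with H | H
    · exact H
    · exfalso
      have h1 := S.diff_mono b (Finset.erase_subset z X) hb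
      rw [H] at h1
      linarith
  -- every z in X: the increment of z over X.erase z is full
  have step_z : ∀ z ∈ X, S.h X - S.h (X.erase z) = t := by
    intro z hz
    have hce : (X.erase z).card ≤ m := by
      rw [Finset.card_erase_of_mem hz, hXcard]
      omega
    rcases IH _ hce z (Finset.notMem_erase z X) with H | H
    · rwa [Finset.insert_erase hz] at H
    · exfalso
      rw [Finset.insert_erase hz] at H
      have h1 : S.h (insert b (X.erase z)) ≤ S.h (insert b X) :=
        S.hmono _ _ (Finset.insert_subset_insert _ (Finset.erase_subset _ _))
      have h2 := step_b z hz
      linarith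
  -- all subsets of X are free
  have free : ∀ (k : ℕ) (Y : Finset N), Y ⊆ X → Y.card = k → S.h Y = t * k := by
    intro k
    induction k with
    | zero =>
      intro Y _ hYc
      rw [Finset.card_eq_zero.mp hYc, S.hnorm]
      simp
    | succ k IHk =>
      intro Y hYX hYc
      have hYne : Y.Nonempty := Finset.card_pos.mp (by omega)
      obtain ⟨y, hy⟩ := hYne
      have hyX : y ∈ X := hYX hy
      have hyn : y ≠ S.n := fun hh => hnX (hh ▸ hyX)
      have e1 : insert y (Y.erase y) = Y := Finset.insert_erase hy
      have hup : S.h Y ≤ S.h (Y.erase y) + t := by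
        have h2 := S.diff_le y (Y.erase y)
        rw [e1, S.hval y hyn] at h2
        exact h2
      have hlow : t ≤ S.h Y - S.h (Y.erase y) := by
        have h3 := S.diff_mono y (Finset.erase_subset_erase y hYX) (Finset.notMem_erase y X)
        rw [Finset.insert_erase hyX, e1] at h3
        have h4 := step_z y hyX
        linarith
      have h5 := IHk (Y.erase y) ((Finset.erase_subset _ _).trans hYX)
        (by rw [Finset.card_erase_of_mem hy, hYc]; omega)
      have : S.h Y = S.h (Y.erase y) + t := by linarith
      rw [this, h5]
      push_cast
      ring
  have hXfree : S.h X = t * X.card := free X.card X Finset.Subset.rfl rfl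
  -- values of (insert b X).erase v
  have hKer : ∀ v ∈ insert b X, S.h ((insert b X).erase v) = t * X.card := by
    intro v hv
    rcases Finset.mem_insert.mp hv with rfl | hvX
    · rw [Finset.erase_insert hb]; exact hXfree
    · have hvb : v ≠ b := fun hh => hb (hh ▸ hvX)
      rw [Finset.erase_insert_of_ne (Ne.symm hvb)]
      have h1 := step_b v hvX
      have h2 := free (X.erase v).card (X.erase v) (Finset.erase_subset _ _) rfl
      rw [Finset.card_erase_of_mem hvX] at h2
      have hc1 : 1 ≤ X.card := Finset.card_pos.mpr ⟨v, hvX⟩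
      have hcast : ((X.card - 1 : ℕ) : ℝ) = (X.card : ℝ) - 1 := by
        push_cast [hc1]
        ring
      rw [hcast] at h2
      have : t * ((X.card : ℝ) - 1) + t = t * X.card := by ring
      linarith
  have haX := S.hperf X hnX
  have haK := S.hperf (insert b X) hnK
  rcases haX with haXt | haX0
  · rcases haK with haKt | haK0
    · -- MAIN BRANCH: a X = t, a K = t
      obtain ⟨I, hnI, hbI, hIa, hIbt⟩ := hess b hbn
      -- V: minimum-cardinality authorized subset of I
      have hIf : I ∈ I.powerset.filter (fun W => S.h (insert S.n W) = S.h W) := by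
        rw [Finset.mem_filter, Finset.mem_powerset]
        exact ⟨Finset.Subset.rfl, hIa⟩
      obtain ⟨V, hVmem, hVmin⟩ := Finset.exists_min_image _ Finset.card ⟨I, hIf⟩
      rw [Finset.mem_filter, Finset.mem_powerset] at hVmem
      obtain ⟨hVI, hVa⟩ := hVmem
      have hnV : S.n ∉ V := fun hh => hnI (hVI hh)
      have hbV : b ∈ V := by
        by_contra hbV
        have hsub : V ⊆ I.erase b := Finset.subset_erase.mpr ⟨hVI, hbV⟩
        have hnIe : S.n ∉ I.erase b := fun hh => hnI (Finset.erase_subset _ _ hh)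
        have h1 := S.a_mono hsub hnIe
        have h3 : S.h (insert S.n V) - S.h V = 0 := sub_eq_zero.mpr hVa
        rw [hIbt, h3] at h1
        linarith
      set J := V.erase b with hJdef
      have hJV : J ⊆ V := Finset.erase_subset _ _
      have hnJ : S.n ∉ J := fun hh => hnV (hJV hh)
      -- K ∪ J is authorized
      have hVKJ : V ⊆ insert b X ∪ J := by
        intro x hx
        by_cases hxb : x = b
        · exact Finset.mem_union_left _ (hxb ▸ Finset.mem_insert_self b X)
        · exact Finset.mem_union_right _ (Finset.mem_erase.mpr ⟨hxb, hx⟩)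
      have hnKJ : S.n ∉ insert b X ∪ J := by
        rw [Finset.mem_union]
        rintro (hh | hh)
        · exact hnK hh
        · exact hnJ hh
      have hKJa : S.h (insert S.n (insert b X ∪ J)) = S.h (insert b X ∪ J) := by
        have h1 := S.a_mono hVKJ hnKJ
        have h2 := S.diff_nonneg S.n (insert b X ∪ J)
        have h3 : S.h (insert S.n V) - S.h V = 0 := sub_eq_zero.mpr hVa
        have h4 : S.h (insert S.n (insert b X ∪ J)) ≤ S.h (insert b X ∪ J) := by linarith
        linarith
      -- Q : minimum-cardinality subset of J with K ∪ Q authorized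
      have hJf : J ∈ J.powerset.filter
          (fun T => S.h (insert S.n (insert b X ∪ T)) = S.h (insert b X ∪ T)) := by
        rw [Finset.mem_filter, Finset.mem_powerset]
        exact ⟨Finset.Subset.rfl, hKJa⟩
      obtain ⟨Q, hQmem, hQmin⟩ := Finset.exists_min_image _ Finset.card ⟨J, hJf⟩
      rw [Finset.mem_filter, Finset.mem_powerset] at hQmem
      obtain ⟨hQJ, hQa⟩ := hQmem
      have hnQ : S.n ∉ Q := fun hh => hnJ (hQJ hh)
      have hQn : ∀ e ∈ Q, e ≠ S.n := fun e he hh => hnQ (hh ▸ he)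
      have hQnotK : ∀ u ∈ Q, u ∉ insert b X := by
        intro u huQ huK
        have he : insert b X ∪ Q.erase u = insert b X ∪ Q := by
          ext x
          simp only [Finset.mem_union, Finset.mem_erase]
          constructor
          · rintro (hx | ⟨_, hx⟩)
            · exact Or.inl hx
            · exact Or.inr hx
          · rintro (hx | hx)
            · exact Or.inl hx
            · by_cases hxu : x = u
              · exact Or.inl (hxu ▸ huK)
              · exact Or.inr ⟨hxu, hx⟩
        have hmem2 : Q.erase u ∈ J.powerset.filter
            (fun T => S.h (insert S.n (insert b X ∪ T)) = S.h (insert b X ∪ T)) := by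
          rw [Finset.mem_filter, Finset.mem_powerset]
          exact ⟨(Finset.erase_subset _ _).trans hQJ, by rw [he]; exact hQa⟩
        have h1 := hQmin _ hmem2
        have h2 := Finset.card_erase_lt_of_mem huQ
        omega
      have hnKQe : ∀ e : N, S.n ∉ insert b X ∪ Q.erase e := by
        intro e
        rw [Finset.mem_union]
        rintro (hh | hh)
        · exact hnK hh
        · exact hnQ (Finset.erase_subset _ _ hh)
      have hQbd : ∀ e ∈ Q,
          S.h (insert S.n (insert b X ∪ Q.erase e)) - S.h (insert b X ∪ Q.erase e) = t := by
        intro e he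
        rcases S.hperf _ (hnKQe e) with H | H
        · exact H
        · exfalso
          have hmem3 : Q.erase e ∈ J.powerset.filter
              (fun T => S.h (insert S.n (insert b X ∪ T)) = S.h (insert b X ∪ T)) := by
            rw [Finset.mem_filter, Finset.mem_powerset]
            exact ⟨(Finset.erase_subset _ _).trans hQJ, sub_eq_zero.mp H⟩
          have h1 := hQmin _ hmem3
          have h2 := Finset.card_erase_lt_of_mem he
          omega
      have hQins : ∀ e ∈ Q, insert e (insert b X ∪ Q.erase e) = insert b X ∪ Q := by
        intro e he
        rw [← Finset.union_insert, Finset.insert_erase he]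
      have hQjump : ∀ e ∈ Q,
          S.h (insert e (insert b X ∪ Q.erase e)) = S.h (insert b X ∪ Q.erase e) + t := by
        intro e he
        exact S.jump (hQn e he) (hQbd e he) (by rw [hQins e he]; exact hQa)
      by_cases hbr : ∀ v ∈ insert b X,
          S.h (insert S.n ((insert b X).erase v ∪ Q)) = S.h ((insert b X).erase v ∪ Q)
      · -- Branch B
        -- lower chain
        have hchainL : ∀ (k : ℕ) (T : Finset N), T ⊆ Q → T.card = k →
            S.h (insert b X) + t * k ≤ S.h (insert b X ∪ T) := by
          intro k
          induction k with
          | zero =>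
            intro T _ hTc
            rw [Finset.card_eq_zero.mp hTc, Finset.union_empty]
            simp
          | succ k IHk =>
            intro T hTQ hTc
            have hTne : T.Nonempty := Finset.card_pos.mp (by omega)
            obtain ⟨e, he⟩ := hTne
            have heQ : e ∈ T → e ∈ Q := fun hh => hTQ hh
            have heQ' : e ∈ Q := hTQ he
            have heK : e ∉ insert b X := hQnotK e heQ'
            have e1 : insert e (insert b X ∪ T.erase e) = insert b X ∪ T := by
              rw [← Finset.union_insert, Finset.insert_erase he]
            have hnotm2 : e ∉ insert b X ∪ Q.erase e := by
              rw [Finset.mem_union]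
              rintro (hh | hh)
              · exact heK hh
              · exact (Finset.notMem_erase e Q) hh
            have hsub2 : insert b X ∪ T.erase e ⊆ insert b X ∪ Q.erase e :=
              Finset.union_subset_union_right (Finset.erase_subset_erase e hTQ)
            have hdm := S.diff_mono e hsub2 hnotm2
            have hjmp := hQjump e heQ'
            have IH2 := IHk (T.erase e) ((Finset.erase_subset _ _).trans hTQ)
              (by rw [Finset.card_erase_of_mem he, hTc]; omega)
            rw [← e1]
            push_cast
            push_cast at IH2
            linarith
        -- get V' and w
        have hbK : b ∈ insert b X := Finset.mem_insert_self b X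
        have hKbQa := hbr b hbK
        have hf2 : ((insert b X).erase b ∪ Q) ∈ ((insert b X).erase b ∪ Q).powerset.filter
            (fun W => S.h (insert S.n W) = S.h W) := by
          rw [Finset.mem_filter, Finset.mem_powerset]
          exact ⟨Finset.Subset.rfl, hKbQa⟩
        obtain ⟨V', hV'mem, hV'min⟩ := Finset.exists_min_image _ Finset.card ⟨_, hf2⟩
        rw [Finset.mem_filter, Finset.mem_powerset] at hV'mem
        obtain ⟨hV'sub, hV'a⟩ := hV'mem
        have hQV' : Q ⊆ V' := by
          intro e heQ
          by_contra heV'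
          have hsub3 : V' ⊆ insert b X ∪ Q.erase e := by
            intro x hxV'
            rcases Finset.mem_union.mp (hV'sub hxV') with hx | hx
            · exact Finset.mem_union_left _ (Finset.erase_subset _ _ hx)
            · have hxe : x ≠ e := fun hh => heV' (hh ▸ hxV')
              exact Finset.mem_union_right _ (Finset.mem_erase.mpr ⟨hxe, hx⟩)
          have h1 := S.a_mono hsub3 (hnKQe e)
          have h2 := hQbd e heQ
          have h3 : S.h (insert S.n V') - S.h V' = 0 := sub_eq_zero.mpr hV'a
          linarith
        have hW' : ∃ w, w ∈ V' ∧ w ∈ insert b X := by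
          by_contra hno
          push_neg at hno
          have hV'Q : V' ⊆ Q := by
            intro x hx
            rcases Finset.mem_union.mp (hV'sub hx) with hxK | hxQ
            · exact absurd (Finset.erase_subset _ _ hxK) (hno x hx)
            · exact hxQ
          have hV'I : V' ⊆ I := hV'Q.trans (hQJ.trans (hJV.trans hVI))
          have hmem4 : V' ∈ I.powerset.filter (fun W => S.h (insert S.n W) = S.h W) := by
            rw [Finset.mem_filter, Finset.mem_powerset]
            exact ⟨hV'I, hV'a⟩
          have h5 := hVmin _ hmem4
          have h6 : V'.card ≤ J.card := Finset.card_le_card (hV'Q.trans hQJ)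
          have h7 : J.card < V.card := Finset.card_erase_lt_of_mem hbV
          omega
        obtain ⟨w, hwV', hwK⟩ := hW'
        have hwb : w ≠ b := by
          intro hh
          subst hh
          rcases Finset.mem_union.mp (hV'sub hwV') with hx | hx
          · exact (Finset.notMem_erase _ _) hx
          · exact hQnotK w hx hwK
        have hwX : w ∈ X := by
          rcases Finset.mem_insert.mp hwK with hh | hh
          · exact absurd hh hwb
          · exact hh
        have hwn : w ≠ S.n := fun hh => hnX (hh ▸ hwX)
        have hwQ : w ∉ Q := fun hh => hQnotK w hh hwK
        -- upper chain for (insert b X).erase w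
        have hchainU : ∀ (k : ℕ) (T' : Finset N), T' ⊆ Q → T'.card = k →
            S.h ((insert b X).erase w ∪ T') ≤ S.h ((insert b X).erase w) + t * k := by
          intro k
          induction k with
          | zero =>
            intro T' _ hTc
            rw [Finset.card_eq_zero.mp hTc, Finset.union_empty]
            simp
          | succ k IHk =>
            intro T' hTQ hTc
            have hTne : T'.Nonempty := Finset.card_pos.mp (by omega)
            obtain ⟨e, he⟩ := hTne
            have heQ' : e ∈ Q := hTQ he
            have heK : e ∉ insert b X := hQnotK e heQ'
            have hen : e ≠ S.n := hQn e heQ'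
            have e1 : insert e ((insert b X).erase w ∪ T'.erase e) =
                (insert b X).erase w ∪ T' := by
              rw [← Finset.union_insert, Finset.insert_erase he]
            have h1 := S.diff_le e ((insert b X).erase w ∪ T'.erase e)
            rw [e1, S.hval e hen] at h1
            have IH2 := IHk (T'.erase e) ((Finset.erase_subset _ _).trans hTQ)
              (by rw [Finset.card_erase_of_mem he, hTc]; omega)
            push_cast
            push_cast at IH2
            linarith
        -- witness for w
        have hSw : S.h (insert S.n (V'.erase w)) - S.h (V'.erase w) = t := by
          have hnV'e : S.n ∉ V'.erase w := by
            intro hh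
            rcases Finset.mem_union.mp (hV'sub (Finset.erase_subset _ _ hh)) with hx | hx
            · exact hnK (Finset.erase_subset _ _ hx)
            · exact hnQ hx
          rcases S.hperf (V'.erase w) hnV'e with H | H
          · exact H
          · exfalso
            have hmem5 : V'.erase w ∈ ((insert b X).erase b ∪ Q).powerset.filter
                (fun W => S.h (insert S.n W) = S.h W) := by
              rw [Finset.mem_filter, Finset.mem_powerset]
              exact ⟨(Finset.erase_subset _ _).trans hV'sub, sub_eq_zero.mp H⟩
            have h5 := hV'min _ hmem5
            have h6 := Finset.card_erase_lt_of_mem hwV'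
            omega
        have hinsV' : insert w (V'.erase w) = V' := Finset.insert_erase hwV'
        have hsubT : V'.erase w ⊆ (insert b X).erase w ∪ Q := by
          intro x hx
          obtain ⟨hxw, hxV'⟩ := Finset.mem_erase.mp hx
          rcases Finset.mem_union.mp (hV'sub hxV') with hxK | hxQ
          · exact Finset.mem_union_left _
              (Finset.mem_erase.mpr ⟨hxw, Finset.erase_subset _ _ hxK⟩)
          · exact Finset.mem_union_right _ hxQ
        have hnT : S.n ∉ (insert b X).erase w ∪ Q := by
          rw [Finset.mem_union]
          rintro (hh | hh)
          · exact hnK (Finset.erase_subset _ _ hh)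
          · exact hnQ hh
        have hwT : w ∉ (insert b X).erase w ∪ Q := by
          rw [Finset.mem_union]
          rintro (hh | hh)
          · exact (Finset.notMem_erase _ _) hh
          · exact hwQ hh
        have hpar := S.parallel (Finset.notMem_erase w V') hwn hSw
          (by rw [hinsV']; exact hV'a) _ hsubT hnT hwT
        have hinsT : insert w ((insert b X).erase w ∪ Q) = insert b X ∪ Q := by
          rw [← Finset.insert_union, Finset.insert_erase hwK]
        have haT := hbr w hwK
        rw [hinsT, haT] at hpar
        have hL := hchainL Q.card Q Finset.Subset.rfl rfl
        have hU := hchainU Q.card Q Finset.Subset.rfl rfl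
        have hKerw := hKer w hwK
        linarith
      · -- Branch A
        push_neg at hbr
        obtain ⟨v, hvK, hvne⟩ := hbr
        have hvQ : v ∉ Q := fun hh => hQnotK v hh hvK
        have hnS : S.n ∉ (insert b X).erase v ∪ Q := by
          rw [Finset.mem_union]
          rintro (hh | hh)
          · exact hnK (Finset.erase_subset _ _ hh)
          · exact hnQ hh
        have hSa : S.h (insert S.n ((insert b X).erase v ∪ Q)) -
            S.h ((insert b X).erase v ∪ Q) = t := by
          rcases S.hperf _ hnS with H | H
          · exact H
          · exact absurd (sub_eq_zero.mp H) hvne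
        have hvS : v ∉ (insert b X).erase v ∪ Q := by
          rw [Finset.mem_union]
          rintro (hh | hh)
          · exact (Finset.notMem_erase _ _) hh
          · exact hvQ hh
        have hvn : v ≠ S.n := fun hh => hnK (hh ▸ hvK)
        have hinsS : insert v ((insert b X).erase v ∪ Q) = insert b X ∪ Q := by
          rw [← Finset.insert_union, Finset.insert_erase hvK]
        have hpar := S.parallel hvS hvn hSa (by rw [hinsS]; exact hQa) _
          Finset.Subset.rfl hnS hvS
        have hsubm := S.hsub (insert b X) ((insert b X).erase v ∪ Q)
        have e3 : insert b X ∪ ((insert b X).erase v ∪ Q) = insert b X ∪ Q := by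
          rw [← Finset.union_assoc,
            Finset.union_eq_left.mpr (Finset.erase_subset _ _)]
        have e4 : insert b X ∩ ((insert b X).erase v ∪ Q) = (insert b X).erase v := by
          rw [Finset.inter_union_distrib_left,
            Finset.inter_eq_right.mpr (Finset.erase_subset _ _)]
          have : insert b X ∩ Q = ∅ := by
            rw [Finset.eq_empty_iff_forall_notMem]
            intro x hx
            rw [Finset.mem_inter] at hx
            exact hQnotK x hx.2 hx.1
          rw [this, Finset.union_empty]
        rw [e3, e4] at hsubm
        have hv1 : S.h (insert b X ∪ Q) = S.h ((insert b X).erase v ∪ Q) + t := by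
          rw [← hinsS, hpar]
          linarith
        have hv2 := hKer v hvK
        linarith
    · -- a X = t, a K = 0 : Lemma A forces d = t, contradiction
      have hjmp := S.jump hbn haXt (sub_eq_zero.mp haK0)
      linarith
  · -- a X = 0 : the authorized-base case
    have hXf : X ∈ X.powerset.filter (fun W => S.h (insert S.n W) = S.h W) := by
      rw [Finset.mem_filter, Finset.mem_powerset]
      exact ⟨Finset.Subset.rfl, sub_eq_zero.mp haX0⟩
    obtain ⟨V, hVmem, hVmin⟩ := Finset.exists_min_image _ Finset.card ⟨X, hXf⟩
    rw [Finset.mem_filter, Finset.mem_powerset] at hVmem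
    obtain ⟨hVX, hVa⟩ := hVmem
    have hVne : V.Nonempty := by
      rcases V.eq_empty_or_nonempty with rfl | hne
      · exfalso
        rw [S.hnorm] at hVa
        have : S.h {S.n} = 0 := by
          have : insert S.n (∅ : Finset N) = {S.n} := rfl
          rw [this] at hVa
          exact hVa
        linarith
      · exact hne
    obtain ⟨z, hzV⟩ := hVne
    have hzX : z ∈ X := hVX hzV
    have hzn : z ≠ S.n := fun hh => hnX (hh ▸ hzX)
    have hnVz : S.n ∉ V.erase z := fun hh => hnX (hVX (Finset.erase_subset _ _ hh))
    have hminz : S.h (insert S.n (V.erase z)) - S.h (V.erase z) = t := by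
      rcases S.hperf (V.erase z) hnVz with H | H
      · exact H
      · exfalso
        have hmem6 : V.erase z ∈ X.powerset.filter (fun W => S.h (insert S.n W) = S.h W) := by
          rw [Finset.mem_filter, Finset.mem_powerset]
          exact ⟨(Finset.erase_subset _ _).trans hVX, sub_eq_zero.mp H⟩
        have h5 := hVmin _ hmem6
        have h6 := Finset.card_erase_lt_of_mem hzV
        omega
    have hinsV : insert z (V.erase z) = V := Finset.insert_erase hzV
    have hzK : z ∈ insert b X := Finset.mem_insert_of_mem hzX
    have hsubT : V.erase z ⊆ (insert b X).erase z := by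
      intro x hx
      obtain ⟨hxz, hxV⟩ := Finset.mem_erase.mp hx
      exact Finset.mem_erase.mpr ⟨hxz, Finset.mem_insert_of_mem (hVX hxV)⟩
    have hnT : S.n ∉ (insert b X).erase z := fun hh => hnK (Finset.erase_subset _ _ hh)
    have hzT : z ∉ (insert b X).erase z := Finset.notMem_erase _ _
    have hpar := S.parallel (Finset.notMem_erase z V) hzn hminz
      (by rw [hinsV]; exact hVa) _ hsubT hnT hzT
    have hinsT : insert z ((insert b X).erase z) = insert b X := Finset.insert_erase hzK
    rw [hinsT] at hpar
    have hTval := hKer z hzK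
    rcases S.hperf ((insert b X).erase z) hnT with H | H
    · linarith
    · linarith


/-- Every increment of `h` equals `h {n}` or `0`. -/
lemma dichotomy (ht : 0 < S.h {S.n})
    (hess : ∀ i : N, i ≠ S.n → ∃ I : Finset N, S.n ∉ I ∧ i ∈ I ∧
      S.h (insert S.n I) = S.h I ∧
      S.h (insert S.n (I.erase i)) - S.h (I.erase i) = S.h {S.n}) :
    ∀ (X : Finset N) (b : N), b ∉ X →
      S.h (insert b X) - S.h X = S.h {S.n} ∨ S.h (insert b X) - S.h X = 0 := by
  suffices H : ∀ (m : ℕ) (X : Finset N), X.card ≤ m → ∀ b, b ∉ X →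
      S.h (insert b X) - S.h X = S.h {S.n} ∨ S.h (insert b X) - S.h X = 0 by
    intro X b hb
    exact H X.card X le_rfl b hb
  intro m
  induction m with
  | zero =>
    intro X hX b _
    have hX0 : X = ∅ := Finset.card_eq_zero.mp (Nat.le_zero.mp hX)
    subst hX0
    rw [S.hnorm]
    by_cases hbn : b = S.n
    · subst hbn
      left
      have : insert S.n (∅ : Finset N) = {S.n} := rfl
      rw [this]
      ring
    · left
      have : insert b (∅ : Finset N) = {b} := rfl
      rw [this, S.hval b hbn]
      ring
  | succ m IH =>
    intro X hcard b hb
    by_cases hXm : X.card ≤ m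
    · exact IH X hXm b hb
    have hXcard : X.card = m + 1 := le_antisymm hcard (by omega)
    by_cases hbn : b = S.n
    · subst hbn
      exact S.hperf X hb
    by_cases hnX : S.n ∈ X
    · -- reduce to X.erase n
      set Y := X.erase S.n with hYdef
      have hYcard : Y.card ≤ m := by
        rw [hYdef, Finset.card_erase_of_mem hnX, hXcard]
        omega
      have hXY : X = insert S.n Y := (Finset.insert_erase hnX).symm
      have hbY : b ∉ Y := fun hh => hb (Finset.erase_subset _ _ hh)
      have hnY : S.n ∉ Y := Finset.notMem_erase _ _
      have hnbY : S.n ∉ insert b Y := by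
        rw [Finset.mem_insert]
        rintro (hh | hh)
        · exact hbn hh.symm
        · exact hnY hh
      have hcomm : insert b X = insert S.n (insert b Y) := by
        rw [hXY, Finset.insert_comm]
      have IH1 := IH Y hYcard b hbY
      have hamono := S.a_mono (Finset.subset_insert b Y) hnbY
      rcases S.hperf Y hnY with h1 | h1 <;> rcases S.hperf (insert b Y) hnbY with h2 | h2
      · rcases IH1 with hD | hD
        · left; rw [hcomm, hXY]; linarith
        · right; rw [hcomm, hXY]; linarith
      · -- a Y = t, a (insert b Y) = 0 : jump gives D = t, so increment over X is 0
        have hD : S.h (insert b Y) = S.h Y + S.h {S.n} :=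
          S.jump hbn h1 (sub_eq_zero.mp h2)
        right; rw [hcomm, hXY]; linarith
      · -- a Y = 0, a (insert b Y) = t : impossible
        exfalso
        rw [h1, h2] at hamono
        linarith
      · rcases IH1 with hD | hD
        · left; rw [hcomm, hXY]; linarith
        · right; rw [hcomm, hXY]; linarith
    · exact S.main_case ht hess IH hXcard hb hbn hnX

/-- `h` takes values in `ℕ • h {n}`. -/
lemma integrality (ht : 0 < S.h {S.n})
    (hess : ∀ i : N, i ≠ S.n → ∃ I : Finset N, S.n ∉ I ∧ i ∈ I ∧
      S.h (insert S.n I) = S.h I ∧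
      S.h (insert S.n (I.erase i)) - S.h (I.erase i) = S.h {S.n}) :
    ∀ X : Finset N, ∃ m : ℕ, S.h X = S.h {S.n} * m := by
  intro X
  induction X using Finset.induction_on with
  | empty => exact ⟨0, by rw [S.hnorm]; simp⟩
  | insert _ _ hb =>
    rename_i i s _
    obtain ⟨m, hm⟩ := by assumption
    rcases S.dichotomy ht hess s i hb with H | H
    · exact ⟨m + 1, by push_cast; linarith⟩
    · exact ⟨m, by linarith⟩

end BDPoly

theorem ideal_implies_matroid {N : Type*} [Fintype N] [DecidableEq N] (h : Finset N → ℝ)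
    (hnorm : h ∅ = 0)
    (hmono : ∀ I J : Finset N, I ⊆ J → h I ≤ h J)
    (hsub : ∀ I J : Finset N, h (I ∪ J) + h (I ∩ J) ≤ h I + h J)
    (n : N)
    (hperf : ∀ I ⊆ ({n}ᶜ : Finset N),
      h (insert n I) - h I = h {n} ∨ h (insert n I) - h I = 0)
    (hess : ∀ i ∈ ({n}ᶜ : Finset N), ∃ I ⊆ ({n}ᶜ : Finset N), i ∈ I ∧
      h (insert n I) = h I ∧ h (insert n (I \ {i})) - h (I \ {i}) = h {n})
    (hval : ∀ i ∈ ({n}ᶜ : Finset N), h {i} = h {n}) :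
    ∃ (r : Finset N → ℝ) (t : ℝ), 0 < t ∧
      r ∅ = 0 ∧
      (∀ I J : Finset N, I ⊆ J → r I ≤ r J) ∧
      (∀ I J : Finset N, r (I ∪ J) + r (I ∩ J) ≤ r I + r J) ∧
      (∀ I : Finset N, ∃ m : ℕ, r I = m) ∧
      (∀ i : N, r {i} = 0 ∨ r {i} = 1) ∧
      (∀ I : Finset N, h I = t * r I) := by
  have hmemc : ∀ i : N, i ≠ n → i ∈ ({n}ᶜ : Finset N) := by
    intro i hi
    rw [Finset.mem_compl, Finset.mem_singleton]
    exact hi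
  have hsubc : ∀ I : Finset N, n ∉ I → I ⊆ ({n}ᶜ : Finset N) := by
    intro I hI x hx
    rw [Finset.mem_compl, Finset.mem_singleton]
    exact fun hh => hI (hh ▸ hx)
  have hval' : ∀ i : N, i ≠ n → h {i} = h {n} := fun i hi => hval i (hmemc i hi)
  have hperf' : ∀ I : Finset N, n ∉ I →
      h (insert n I) - h I = h {n} ∨ h (insert n I) - h I = 0 :=
    fun I hI => hperf I (hsubc I hI)
  set S : BDPoly N := ⟨h, n, hnorm, hmono, hsub, hperf', hval'⟩ with hSdef
  by_cases ht : h {n} = 0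
  · -- degenerate case : h is identically zero
    have hzero : ∀ I : Finset N, h I = 0 := by
      intro I
      induction I using Finset.induction_on with
      | empty => exact hnorm
      | insert _ _ hb =>
        rename_i i s hs
        have h1 : h (insert i s) ≤ h s + h {i} := S.diff_le i s
        have h2 : h {i} = 0 := by
          by_cases hi : i = n
          · rw [hi]; exact ht
          · rw [hval' i hi]; exact ht
        have h3 : h s ≤ h (insert i s) := hmono _ _ (Finset.subset_insert _ _)
        have h4 : 0 ≤ h s := by
          have := hmono ∅ s (Finset.empty_subset s)
          rw [hnorm] at this
          exact this
        linarith
    exact ⟨fun _ => 0, 1, one_pos, rfl, fun I J _ => le_rfl, fun I J => by simp,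
      fun I => ⟨0, by simp⟩, fun i => Or.inl rfl, fun I => by rw [hzero I]; ring⟩
  · have htpos : 0 < h {n} := lt_of_le_of_ne (S.h_nonneg {n}) (Ne.symm ht)
    have hess' : ∀ i : N, i ≠ n → ∃ I : Finset N, n ∉ I ∧ i ∈ I ∧
        h (insert n I) = h I ∧
        h (insert n (I.erase i)) - h (I.erase i) = h {n} := by
      intro i hi
      obtain ⟨I, hIc, hiI, he1, he2⟩ := hess i (hmemc i hi)
      refine ⟨I, ?_, hiI, he1, ?_⟩
      · intro hnI
        have := hIc hnI
        rw [Finset.mem_compl, Finset.mem_singleton] at this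
        exact this rfl
      · rwa [← Finset.erase_eq] at he2
    have hint : ∀ X : Finset N, ∃ m : ℕ, h X = h {n} * m := S.integrality htpos hess'
    have hr : ∀ I : Finset N, h I = h {n} * ((Classical.choose (hint I) : ℕ) : ℝ) :=
      fun I => Classical.choose_spec (hint I)
    refine ⟨fun I => ((Classical.choose (hint I) : ℕ) : ℝ), h {n}, htpos, ?_, ?_, ?_, ?_, ?_, ?_⟩
    · have h1 : h {n} * ((Classical.choose (hint ∅) : ℕ) : ℝ) = 0 := by
        rw [← hr ∅]; exact hnorm
      rcases mul_eq_zero.mp h1 with h2 | h2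
      · exact absurd h2 ht
      · exact h2
    · intro I J hIJ
      have h1 := hmono I J hIJ
      rw [hr I, hr J] at h1
      exact le_of_mul_le_mul_left h1 htpos
    · intro I J
      have h1 := hsub I J
      rw [hr (I ∪ J), hr (I ∩ J), hr I, hr J] at h1
      have h2 : h {n} * (((Classical.choose (hint (I ∪ J)) : ℕ) : ℝ) +
          ((Classical.choose (hint (I ∩ J)) : ℕ) : ℝ)) ≤
          h {n} * (((Classical.choose (hint I) : ℕ) : ℝ) +
          ((Classical.choose (hint J) : ℕ) : ℝ)) := by ring_nf; ring_nf at h1; linarith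
      exact le_of_mul_le_mul_left h2 htpos
    · intro I
      exact ⟨Classical.choose (hint I), rfl⟩
    · intro i
      right
      have h1 : h {i} = h {n} := by
        by_cases hi : i = n
        · rw [hi]
        · exact hval' i hi
      have h3 : h {n} * ((Classical.choose (hint {i}) : ℕ) : ℝ) = h {n} * 1 := by
        rw [mul_one, ← hr {i}]; exact h1
      exact mul_left_cancel₀ ht h3
    · intro I
      exact hr I
end

section
/- An element n of a polyquantoid (N,e) is perfect if and only if n is perfect in the associated polymatroid (N,ê), where ê(I) = e(I) + Σ_{i∈I} e({i}); moreover I ⊆ N∖{n} is authorized for n in (N,e) if and only if it is authorized in (N,ê). -/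
open Finset

lemma hat_diff {N : Type*} [DecidableEq N] (e : Finset N → ℝ) {n : N} {I : Finset N}
    (hn : n ∉ I) :
    hatFn e (insert n I) - hatFn e I = (e (insert n I) - e I) + e {n} := by
  simp [hatFn, Finset.sum_insert hn]; ring

theorem perfect_iff_hat {N : Type*} [Fintype N] [DecidableEq N] (e : Finset N → ℝ)
    (hnorm : e ∅ = 0)
    (hcompl : ∀ I : Finset N, e I = e Iᶜ)
    (hsub : ∀ I J : Finset N, e (I ∪ J) + e (I ∩ J) ≤ e I + e J)
    (n : N) :
    ((∀ I ⊆ ({n}ᶜ : Finset N),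
        e (insert n I) - e I = e {n} ∨ e (insert n I) - e I = -e {n}) ↔
      (∀ I ⊆ ({n}ᶜ : Finset N),
        hatFn e (insert n I) - hatFn e I = hatFn e {n} ∨
          hatFn e (insert n I) - hatFn e I = 0)) ∧
    (∀ I ⊆ ({n}ᶜ : Finset N),
      e (insert n I) - e I = -e {n} ↔ hatFn e (insert n I) = hatFn e I) := by
  have hnot : ∀ I : Finset N, I ⊆ ({n}ᶜ : Finset N) → n ∉ I := by
    intro I hI hn
    simpa using hI hn
  have hhatn : hatFn e {n} = e {n} + e {n} := by simp [hatFn]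
  constructor
  · constructor
    · intro h I hI
      have hd := hat_diff e (hnot I hI)
      rcases h I hI with h' | h'
      · left; rw [hd, h', hhatn]
      · right; rw [hd, h']; ring
    · intro h I hI
      have hd := hat_diff e (hnot I hI)
      rcases h I hI with h' | h'
      · rw [hd, hhatn] at h'; left; linarith
      · rw [hd] at h'; right; linarith
  · intro I hI
    constructor
    · intro h'
      have := hat_diff e (hnot I hI)
      rw [h'] at this
      linarith
    · intro h'
      have := hat_diff e (hnot I hI)
      rw [h'] at this
      linarith
end

section
/- Any free expansion of an integer polyquantoid is a quantoid: if (N,e) is an integer polyquantoid and ψ assigns to each i ∈ N a set ψ(i) of cardinality e({i}) with the sets ψ(i) pairwise disjoint, then the function e_ψ(K) = min over J ⊆ N of [e(J) + |K △ ψ(J)|], for K ⊆ ψ(N), is normalized, complementary, submodular, and takes value 1 on every singleton (hence is an integer polyquantoid with singleton values in {0,1}). -/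
open Finset

section AuxLemmas

set_option linter.unusedSectionVars false

variable {N M : Type*} [Fintype N] [DecidableEq N] [DecidableEq M]

private lemma fq_card_eq_sum_ind (U S : Finset M) (h : S ⊆ U) :
    (S.card : ℤ) = ∑ x ∈ U, (if x ∈ S then (1:ℤ) else 0) := by
  rw [← Finset.sum_subset h (fun x _ hx => by simp [hx])]
  simp

private lemma fq_symmDiff_card_submod (K L A B : Finset M) :
    ((symmDiff (K ∪ L) (A ∪ B)).card : ℤ) + ((symmDiff (K ∩ L) (A ∩ B)).card : ℤ)
      ≤ ((symmDiff K A).card : ℤ) + ((symmDiff L B).card : ℤ) := by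
  set U := K ∪ L ∪ A ∪ B with hU
  have hKU : K ⊆ U := by intro x hx; simp [hU, hx]
  have hLU : L ⊆ U := by intro x hx; simp [hU, hx]
  have hAU : A ⊆ U := by intro x hx; simp [hU, hx]
  have hBU : B ⊆ U := by intro x hx; simp [hU, hx]
  have h1 : symmDiff (K ∪ L) (A ∪ B) ⊆ U := by
    intro x hx; rw [Finset.mem_symmDiff] at hx
    rcases hx with ⟨h, _⟩ | ⟨h, _⟩ <;> rcases Finset.mem_union.mp h with h | h <;>
      [exact hKU h; exact hLU h; exact hAU h; exact hBU h]
  have h2 : symmDiff (K ∩ L) (A ∩ B) ⊆ U := by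
    intro x hx; rw [Finset.mem_symmDiff] at hx
    rcases hx with ⟨h, _⟩ | ⟨h, _⟩
    · exact hKU (Finset.mem_inter.mp h).1
    · exact hAU (Finset.mem_inter.mp h).1
  have h3 : symmDiff K A ⊆ U := by
    intro x hx; rw [Finset.mem_symmDiff] at hx
    rcases hx with ⟨h, _⟩ | ⟨h, _⟩ <;> [exact hKU h; exact hAU h]
  have h4 : symmDiff L B ⊆ U := by
    intro x hx; rw [Finset.mem_symmDiff] at hx
    rcases hx with ⟨h, _⟩ | ⟨h, _⟩ <;> [exact hLU h; exact hBU h]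
  rw [fq_card_eq_sum_ind U _ h1, fq_card_eq_sum_ind U _ h2, fq_card_eq_sum_ind U _ h3,
    fq_card_eq_sum_ind U _ h4, ← Finset.sum_add_distrib, ← Finset.sum_add_distrib]
  apply Finset.sum_le_sum
  intro x _
  by_cases hk : x ∈ K <;> by_cases hl : x ∈ L <;> by_cases ha : x ∈ A <;> by_cases hb : x ∈ B <;>
    simp [Finset.mem_symmDiff, hk, hl, ha, hb]

private lemma fq_biUnion_union (ψ : N → Finset M) (J J' : Finset N) :
    (J ∪ J').biUnion ψ = (J.biUnion ψ) ∪ (J'.biUnion ψ) := by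
  ext x
  simp only [Finset.mem_biUnion, Finset.mem_union]
  constructor
  · rintro ⟨i, h | h, hx⟩
    · exact Or.inl ⟨i, h, hx⟩
    · exact Or.inr ⟨i, h, hx⟩
  · rintro (⟨i, h, hx⟩ | ⟨i, h, hx⟩)
    · exact ⟨i, Or.inl h, hx⟩
    · exact ⟨i, Or.inr h, hx⟩

private lemma fq_biUnion_inter (ψ : N → Finset M)
    (hdisj : ∀ i j : N, i ≠ j → Disjoint (ψ i) (ψ j))
    (J J' : Finset N) : (J ∩ J').biUnion ψ = (J.biUnion ψ) ∩ (J'.biUnion ψ) := by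
  ext x
  simp only [Finset.mem_biUnion, Finset.mem_inter]
  constructor
  · rintro ⟨i, ⟨h1, h2⟩, hx⟩; exact ⟨⟨i, h1, hx⟩, ⟨i, h2, hx⟩⟩
  · rintro ⟨⟨i, h1, hx⟩, ⟨j, h2, hy⟩⟩
    have : i = j := by
      by_contra hne
      exact Finset.disjoint_left.mp (hdisj i j hne) hx hy
    exact ⟨i, ⟨h1, this ▸ h2⟩, hx⟩

private lemma fq_biUnion_compl (ψ : N → Finset M)
    (hdisj : ∀ i j : N, i ≠ j → Disjoint (ψ i) (ψ j))
    (J : Finset N) : Jᶜ.biUnion ψ = (Finset.univ.biUnion ψ) \ (J.biUnion ψ) := by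
  ext x
  simp only [Finset.mem_biUnion, Finset.mem_sdiff, Finset.mem_compl, Finset.mem_univ, true_and]
  constructor
  · rintro ⟨i, hi, hx⟩
    refine ⟨⟨i, hx⟩, ?_⟩
    rintro ⟨j, hj, hy⟩
    have : i = j := by
      by_contra hne
      exact Finset.disjoint_left.mp (hdisj i j hne) hx hy
    exact hi (this ▸ hj)
  · rintro ⟨⟨i, hx⟩, h⟩
    exact ⟨i, fun hi => h ⟨i, hi, hx⟩, hx⟩

private lemma fq_sdiff_symmDiff (W K A : Finset M) (hK : K ⊆ W) (hA : A ⊆ W) :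
    symmDiff (W \ K) (W \ A) = symmDiff K A := by
  ext x
  simp only [Finset.mem_symmDiff, Finset.mem_sdiff]
  constructor
  · rintro (⟨⟨hw, hk⟩, h⟩ | ⟨⟨hw, ha⟩, h⟩)
    · right; exact ⟨by_contra fun ha => h ⟨hw, ha⟩, hk⟩
    · left; exact ⟨by_contra fun hk => h ⟨hw, hk⟩, ha⟩
  · rintro (⟨hk, ha⟩ | ⟨ha, hk⟩)
    · right; exact ⟨⟨hK hk, ha⟩, fun h => h.2 hk⟩
    · left; exact ⟨⟨hA ha, hk⟩, fun h => h.2 ha⟩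

end AuxLemmas

/-- The free expansion `e_ψ` of an integer set function `e`, using symmetric difference. -/
def expandQ {N M : Type*} [Fintype N] [DecidableEq N] [DecidableEq M]
    (e : Finset N → ℤ) (ψ : N → Finset M) (K : Finset M) : ℤ :=
  (Finset.univ : Finset N).powerset.inf' (Finset.powerset_nonempty _)
    (fun J => e J + ((symmDiff K (J.biUnion ψ)).card : ℤ))

theorem free_expansion_is_quantoid {N M : Type*} [Fintype N] [DecidableEq N] [DecidableEq M]
    (e : Finset N → ℤ)
    (hnorm : e ∅ = 0)
    (hcompl : ∀ I : Finset N, e I = e Iᶜ)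
    (hsub : ∀ I J : Finset N, e (I ∪ J) + e (I ∩ J) ≤ e I + e J)
    (ψ : N → Finset M)
    (hcard : ∀ i : N, ((ψ i).card : ℤ) = e {i})
    (hdisj : ∀ i j : N, i ≠ j → Disjoint (ψ i) (ψ j)) :
    expandQ e ψ ∅ = 0 ∧
    (∀ K ⊆ Finset.univ.biUnion ψ,
      expandQ e ψ K = expandQ e ψ (Finset.univ.biUnion ψ \ K)) ∧
    (∀ K ⊆ Finset.univ.biUnion ψ, ∀ L ⊆ Finset.univ.biUnion ψ,
      expandQ e ψ (K ∪ L) + expandQ e ψ (K ∩ L) ≤ expandQ e ψ K + expandQ e ψ L) ∧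
    (∀ k ∈ Finset.univ.biUnion ψ, expandQ e ψ {k} = 1) := by
  -- basic tools
  have ub : ∀ (K : Finset M) (J : Finset N),
      expandQ e ψ K ≤ e J + ((symmDiff K (J.biUnion ψ)).card : ℤ) := fun K J =>
    Finset.inf'_le _ (Finset.mem_powerset.mpr (Finset.subset_univ J))
  have lb : ∀ (K : Finset M) (c : ℤ),
      (∀ J : Finset N, c ≤ e J + ((symmDiff K (J.biUnion ψ)).card : ℤ)) →
      c ≤ expandQ e ψ K := fun K c h =>
    Finset.le_inf' _ _ (fun J _ => h J)
  -- e univ = 0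
  have euniv : e Finset.univ = 0 := by
    have := hcompl ∅
    rw [Finset.compl_empty] at this
    omega
  -- e is nonnegative
  have enonneg : ∀ J : Finset N, 0 ≤ e J := by
    intro J
    have h := hsub J Jᶜ
    rw [Finset.union_compl, Finset.inter_compl] at h
    have h2 := hcompl J
    linarith
  -- e bounded above by the sum of singletons
  have esum : ∀ S : Finset N, e S ≤ ∑ j ∈ S, e {j} := by
    intro S
    induction S using Finset.induction_on with
    | empty => simp [hnorm]
    | @insert a S ha ih =>
      have h := hsub {a} S
      rw [Finset.singleton_inter_of_notMem ha, hnorm, ← Finset.insert_eq] at h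
      rw [Finset.sum_insert ha]
      linarith
  -- cardinality of biUnion
  have cardψ : ∀ J : Finset N, ((J.biUnion ψ).card : ℤ) = ∑ j ∈ J, e {j} := by
    intro J
    rw [Finset.card_biUnion (fun i _ j _ hne => hdisj i j hne)]
    push_cast
    exact Finset.sum_congr rfl fun i _ => hcard i
  -- lower bound for e J involving one distinguished element
  have elower : ∀ (J : Finset N) (i : N), i ∈ J → e {i} ≤ e J + ∑ j ∈ J \ {i}, e {j} := by
    intro J i hi
    have hset : Jᶜ ∪ (J \ {i}) = {i}ᶜ := by
      ext x
      simp only [Finset.mem_union, Finset.mem_compl, Finset.mem_sdiff, Finset.mem_singleton]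
      constructor
      · rintro (h | ⟨_, h⟩)
        · rintro rfl; exact h hi
        · exact h
      · intro h
        by_cases hx : x ∈ J
        · right; exact ⟨hx, h⟩
        · left; exact hx
    have hint : Jᶜ ∩ (J \ {i}) = ∅ := by
      ext x
      simp only [Finset.mem_inter, Finset.mem_compl, Finset.mem_sdiff, Finset.notMem_empty,
        iff_false]
      rintro ⟨h1, h2, _⟩; exact h1 h2
    have h := hsub Jᶜ (J \ {i})
    rw [hset, hint, hnorm] at h
    have h1 := hcompl {i}
    have h2 := hcompl Jᶜ
    rw [compl_compl] at h2
    have h3 := esum (J \ {i})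
    linarith
  -- biUnion univ ⊆ is the ambient set
  set W := Finset.univ.biUnion ψ with hW
  have hψW : ∀ J : Finset N, J.biUnion ψ ⊆ W := fun J =>
    Finset.biUnion_subset_biUnion_of_subset_left ψ (Finset.subset_univ J)
  refine ⟨?_, ?_, ?_, ?_⟩
  -- (1) normalized
  · apply le_antisymm
    · have h := ub ∅ ∅
      simpa [hnorm] using h
    · apply lb
      intro J
      have := enonneg J
      omega
  -- (2) complementary
  · have key : ∀ K ⊆ W, expandQ e ψ (W \ K) ≤ expandQ e ψ K := by
      intro K hK
      apply Finset.le_inf'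
      intro J _
      have h := ub (W \ K) Jᶜ
      rw [fq_biUnion_compl ψ hdisj J, ← hW,
        fq_sdiff_symmDiff W K (J.biUnion ψ) hK (hψW J), ← hcompl J] at h
      exact h
    intro K hK
    have h1 := key K hK
    have h2 := key (W \ K) (Finset.sdiff_subset)
    rw [Finset.sdiff_sdiff_eq_self hK] at h2
    omega
  -- (3) submodular
  · intro K _ L _
    obtain ⟨J₁, -, h1⟩ := Finset.exists_mem_eq_inf'
      (Finset.powerset_nonempty (Finset.univ : Finset N))
      (fun J => e J + ((symmDiff K (J.biUnion ψ)).card : ℤ))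
    obtain ⟨J₂, -, h2⟩ := Finset.exists_mem_eq_inf'
      (Finset.powerset_nonempty (Finset.univ : Finset N))
      (fun J => e J + ((symmDiff L (J.biUnion ψ)).card : ℤ))
    have hKe : expandQ e ψ K = e J₁ + ((symmDiff K (J₁.biUnion ψ)).card : ℤ) := h1
    have hLe : expandQ e ψ L = e J₂ + ((symmDiff L (J₂.biUnion ψ)).card : ℤ) := h2
    have hKu := ub (K ∪ L) (J₁ ∪ J₂)
    have hKi := ub (K ∩ L) (J₁ ∩ J₂)
    rw [fq_biUnion_union ψ J₁ J₂] at hKu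
    rw [fq_biUnion_inter ψ hdisj] at hKi
    have hc := fq_symmDiff_card_submod K L (J₁.biUnion ψ) (J₂.biUnion ψ)
    have hs := hsub J₁ J₂
    linarith
  -- (4) singletons
  · intro k hk
    apply le_antisymm
    · have h := ub {k} ∅
      have hs : symmDiff ({k} : Finset M) ∅ = {k} := symmDiff_bot _
      simpa [hnorm, hs] using h
    · apply lb
      intro J
      by_cases hkJ : k ∈ J.biUnion ψ
      · obtain ⟨j, hjJ, hkj⟩ := Finset.mem_biUnion.mp hkJ
        have hsd : symmDiff {k} (J.biUnion ψ) = J.biUnion ψ \ {k} := by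
          ext x
          simp only [Finset.mem_symmDiff, Finset.mem_sdiff, Finset.mem_singleton]
          constructor
          · rintro (⟨rfl, h⟩ | h)
            · exact absurd hkJ h
            · exact h
          · intro h; right; exact h
        have hpos : 0 < (J.biUnion ψ).card := Finset.card_pos.mpr ⟨k, hkJ⟩
        have hcardsd : ((J.biUnion ψ \ {k}).card : ℤ) = ((J.biUnion ψ).card : ℤ) - 1 := by
          rw [Finset.card_sdiff_of_subset (Finset.singleton_subset_iff.mpr hkJ), Finset.card_singleton]
          omega
        have hj1 : (1:ℤ) ≤ e {j} := by
          have h0 : 0 < (ψ j).card := Finset.card_pos.mpr ⟨k, hkj⟩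
          have : (1:ℤ) ≤ ((ψ j).card : ℤ) := by exact_mod_cast h0
          rwa [hcard j] at this
        have h2 := elower J j hjJ
        have h3 := cardψ J
        have hsum : ∑ l ∈ J, e {l} = ∑ l ∈ J \ {j}, e {l} + e {j} := by
          rw [← Finset.sum_sdiff (Finset.singleton_subset_iff.mpr hjJ), Finset.sum_singleton]
        rw [hsd, hcardsd]
        linarith
      · have hmem : k ∈ symmDiff {k} (J.biUnion ψ) := by
          rw [Finset.mem_symmDiff]
          exact Or.inl ⟨Finset.mem_singleton_self k, hkJ⟩
        have hpos : 0 < (symmDiff {k} (J.biUnion ψ)).card := Finset.card_pos.mpr ⟨k, hmem⟩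
        have h1 : (1:ℤ) ≤ ((symmDiff {k} (J.biUnion ψ)).card : ℤ) := by exact_mod_cast hpos
        have := enonneg J
        linarith
end
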